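/- Let X and Y be Polish spaces, c a cost function on Y, and f : X → Y a measurable function. Let c_f denote the induced cost function on X defined by c_f(x, x') = c(f(x), f(x')). Then for any probability measures μ, ν on X, the optimal transport costs satisfy T_c(f_*μ, f_*ν) = T_{c_f}(μ, ν). -/

import Mathlib

open MeasureTheory ENNReal Filter Topology

/-- The optimal transport cost between two measures `μ` and `ν` on a space `Z`
with base cost `c`. -/
noncomputable def otCost {Z : Type*} [MeasurableSpace Z]
    (c : Z → Z → ℝ≥0∞) (μ ν : Measure Z) : ℝ≥0∞ :=
  ⨅ (π : Measure (Z × Z)) (_ : π.map Prod.fst = μ ∧ π.map Prod.snd = ν),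
    ∫⁻ p, c p.1 p.2 ∂π

open ProbabilityTheory Set in
/-- Disintegration of a probability measure `μ` along a measurable map `f`. -/
lemma otCost_aux_disintegration
    {X Y : Type*} [TopologicalSpace X] [PolishSpace X] [MeasurableSpace X] [BorelSpace X]
    [TopologicalSpace Y] [PolishSpace Y] [MeasurableSpace Y] [BorelSpace Y]
    (f : X → Y) (hf : Measurable f) (μ : Measure X) [IsProbabilityMeasure μ] :
    ∃ κ : Kernel Y X, IsMarkovKernel κ ∧
      (∀ s : Set X, MeasurableSet s → ∫⁻ y, κ y s ∂(μ.map f) = μ s) ∧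
      (Measurable fun y => κ y {x | f x ≠ y}) ∧
      (∀ᵐ y ∂(μ.map f), κ y {x | f x ≠ y} = 0) := by
  haveI : Nonempty X := by
    by_contra h
    rw [not_nonempty_iff] at h
    have h1 : (Set.univ : Set X) = ∅ := Set.univ_eq_empty_iff.mpr h
    have h2 := measure_univ (μ := μ)
    rw [h1, measure_empty] at h2
    exact zero_ne_one h2
  set g : X → Y × X := fun x => (f x, x) with hg
  have hgm : Measurable g := hf.prodMk measurable_id
  set ρ : Measure (Y × X) := μ.map g with hρ
  have : IsProbabilityMeasure ρ := Measure.isProbabilityMeasure_map hgm.aemeasurable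
  have hfst : ρ.fst = μ.map f := by
    rw [Measure.fst, hρ, Measure.map_map measurable_fst hgm]
    rfl
  have hdisint : ρ.fst ⊗ₘ ρ.condKernel = ρ := ρ.disintegrate ρ.condKernel
  have hA : MeasurableSet {p : Y × X | f p.2 = p.1} := by
    have heq : {p : Y × X | f p.2 = p.1} = (fun p : Y × X => (f p.2, p.1)) ⁻¹' Set.diagonal Y := by
      ext p; simp [Set.mem_diagonal_iff]
    rw [heq]
    exact ((hf.comp measurable_snd).prodMk measurable_fst) isClosed_diagonal.measurableSet
  have hAc : MeasurableSet {p : Y × X | f p.2 ≠ p.1} := by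
    have : {p : Y × X | f p.2 ≠ p.1} = {p : Y × X | f p.2 = p.1}ᶜ := rfl
    rw [this]; exact hA.compl
  have hpre : ∀ y : Y, Prod.mk y ⁻¹' {p : Y × X | f p.2 ≠ p.1} = {x | f x ≠ y} := by
    intro y; ext x; simp [eq_comm]
  refine ⟨ρ.condKernel, inferInstance, ?_, ?_, ?_⟩
  · intro s hs
    have h1 : (ρ.fst ⊗ₘ ρ.condKernel) (univ ×ˢ s) = ∫⁻ y, ρ.condKernel y s ∂ρ.fst := by
      rw [Measure.compProd_apply (MeasurableSet.univ.prod hs)]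
      apply lintegral_congr; intro y
      have : Prod.mk y ⁻¹' ((univ : Set Y) ×ˢ s) = s := by ext x; simp
      rw [this]
    have h2 : ρ (univ ×ˢ s) = μ s := by
      rw [hρ, Measure.map_apply hgm (MeasurableSet.univ.prod hs)]
      have : g ⁻¹' ((univ : Set Y) ×ˢ s) = s := by ext x; simp [hg]
      rw [this]
    rw [← hfst, ← h1, hdisint, h2]
  · have := Kernel.measurable_kernel_prodMk_left (κ := ρ.condKernel) hAc
    simpa only [hpre] using this
  · have hzero : ρ {p : Y × X | f p.2 ≠ p.1} = 0 := by
      rw [hρ, Measure.map_apply hgm hAc]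
      have : g ⁻¹' {p : Y × X | f p.2 ≠ p.1} = ∅ := by ext x; simp [hg]
      rw [this, measure_empty]
    rw [← hdisint, Measure.compProd_apply hAc,
      lintegral_eq_zero_iff (Kernel.measurable_kernel_prodMk_left hAc)] at hzero
    rw [← hfst]
    filter_upwards [hzero] with y hy
    rwa [hpre y] at hy

open ProbabilityTheory Set in
/-- For a measurable map `f : X → Y` between Polish spaces and a cost
function `c` on `Y`, the optimal transport cost satisfies
`T_c(f_*μ, f_*ν) = T_{c_f}(μ, ν)`, where `c_f(x, x') = c(f x, f x')`. -/
theorem otCost_map_eq_otCost_induced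
    {X Y : Type*} [TopologicalSpace X] [PolishSpace X] [MeasurableSpace X] [BorelSpace X]
    [TopologicalSpace Y] [PolishSpace Y] [MeasurableSpace Y] [BorelSpace Y]
    (c : Y → Y → ℝ≥0∞)
    (hc_lsc : LowerSemicontinuous (Function.uncurry c))
    (hc_symm : ∀ y₁ y₂, c y₁ y₂ = c y₂ y₁)
    (hc_diag : ∀ y, c y y = 0)
    (f : X → Y) (hf : Measurable f)
    (μ ν : Measure X) [IsProbabilityMeasure μ] [IsProbabilityMeasure ν] :
    otCost c (μ.map f) (ν.map f) = otCost (fun x x' => c (f x) (f x')) μ ν := by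
  have hcm : Measurable (Function.uncurry c) := hc_lsc.measurable
  have hcm' : Measurable fun p : Y × Y => c p.1 p.2 := hcm
  have hcfm : Measurable fun p : X × X => c (f p.1) (f p.2) :=
    hcm.comp ((hf.comp measurable_fst).prodMk (hf.comp measurable_snd))
  apply le_antisymm
  · -- easy direction: push forward a coupling of μ, ν by f × f
    refine le_iInf fun π => le_iInf fun hπ => ?_
    by_cases hprob : IsProbabilityMeasure π
    swap
    · exfalso
      apply hprob
      constructor
      have : (π.map Prod.fst) univ = 1 := by rw [hπ.1]; exact measure_univ
      rwa [Measure.map_apply measurable_fst MeasurableSet.univ, preimage_univ] at this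
    have hffm : Measurable (Prod.map f f) := hf.prodMap hf
    have h1 : (π.map (Prod.map f f)).map Prod.fst = μ.map f := by
      rw [Measure.map_map measurable_fst hffm,
        show Prod.fst ∘ Prod.map f f = f ∘ Prod.fst from rfl,
        ← Measure.map_map hf measurable_fst, hπ.1]
    have h2 : (π.map (Prod.map f f)).map Prod.snd = ν.map f := by
      rw [Measure.map_map measurable_snd hffm,
        show Prod.snd ∘ Prod.map f f = f ∘ Prod.snd from rfl,
        ← Measure.map_map hf measurable_snd, hπ.2]
    calc otCost c (μ.map f) (ν.map f)
        ≤ ∫⁻ p, c p.1 p.2 ∂(π.map (Prod.map f f)) := iInf₂_le _ ⟨h1, h2⟩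
      _ = ∫⁻ p, c (f p.1) (f p.2) ∂π := lintegral_map hcm' hffm
      _ = ∫⁻ p, (fun x x' => c (f x) (f x')) p.1 p.2 ∂π := rfl
  · -- hard direction: lift a coupling of f_*μ, f_*ν via disintegration
    refine le_iInf fun γ => le_iInf fun hγ => ?_
    haveI : IsProbabilityMeasure (μ.map f) := Measure.isProbabilityMeasure_map hf.aemeasurable
    haveI : IsProbabilityMeasure (ν.map f) := Measure.isProbabilityMeasure_map hf.aemeasurable
    obtain ⟨κ, hκM, hκbind, hκmeas, hκae⟩ := otCost_aux_disintegration f hf μ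
    obtain ⟨η, hηM, hηbind, hηmeas, hηae⟩ := otCost_aux_disintegration f hf ν
    have hγprob : IsProbabilityMeasure γ := by
      constructor
      have : (γ.map Prod.fst) univ = 1 := by rw [hγ.1]; exact measure_univ
      rwa [Measure.map_apply measurable_fst MeasurableSet.univ, preimage_univ] at this
    set K : Kernel (Y × Y) (X × X) :=
      (κ.comap Prod.fst measurable_fst) ×ₖ (η.comap Prod.snd measurable_snd) with hK
    have hKM : IsMarkovKernel K := by
      rw [hK]
      have : IsMarkovKernel (κ.comap Prod.fst (measurable_fst : Measurable (Prod.fst : Y × Y → Y))) :=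
        Kernel.IsMarkovKernel.comap κ measurable_fst
      have : IsMarkovKernel (η.comap Prod.snd (measurable_snd : Measurable (Prod.snd : Y × Y → Y))) :=
        Kernel.IsMarkovKernel.comap η measurable_snd
      infer_instance
    have hKapply : ∀ p : Y × Y, K p = (κ p.1).prod (η p.2) := by
      intro p
      rw [hK, Kernel.prod_apply, Kernel.comap_apply, Kernel.comap_apply]
    set π : Measure (X × X) := (γ ⊗ₘ K).map Prod.snd with hπdef
    -- marginals of π
    have hπ1 : π.map Prod.fst = μ := by
      ext s hs
      rw [Measure.map_apply measurable_fst hs, hπdef,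
        Measure.map_apply measurable_snd (measurable_fst hs),
        Measure.compProd_apply (measurable_snd (measurable_fst hs))]
      have : ∀ p : Y × Y, K p (Prod.mk p ⁻¹' (Prod.snd ⁻¹' (Prod.fst ⁻¹' s))) = κ p.1 s := by
        intro p
        have hpre : Prod.mk p ⁻¹' (Prod.snd ⁻¹' (Prod.fst ⁻¹' s)) = s ×ˢ (univ : Set X) := by
          ext q; simp
        rw [hpre, hKapply p, Measure.prod_prod, measure_univ, mul_one]
      simp_rw [this]
      rw [← lintegral_map (κ.measurable_coe hs) measurable_fst, hγ.1, hκbind s hs]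
    have hπ2 : π.map Prod.snd = ν := by
      ext s hs
      rw [Measure.map_apply measurable_snd hs, hπdef,
        Measure.map_apply measurable_snd (measurable_snd hs),
        Measure.compProd_apply (measurable_snd (measurable_snd hs))]
      have : ∀ p : Y × Y, K p (Prod.mk p ⁻¹' (Prod.snd ⁻¹' (Prod.snd ⁻¹' s))) = η p.2 s := by
        intro p
        have hpre : Prod.mk p ⁻¹' (Prod.snd ⁻¹' (Prod.snd ⁻¹' s)) = (univ : Set X) ×ˢ s := by
          ext q; simp
        rw [hpre, hKapply p, Measure.prod_prod, measure_univ, one_mul]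
      simp_rw [this]
      rw [← lintegral_map (η.measurable_coe hs) measurable_snd, hγ.2, hηbind s hs]
    -- a.e. concentration facts transported to γ
    have hκγ : ∀ᵐ p ∂γ, κ p.1 {x | f x ≠ p.1} = 0 := by
      have hmeas : MeasurableSet {y : Y | κ y {x | f x ≠ y} = 0} :=
        hκmeas (measurableSet_singleton 0)
      have h := hκae
      rw [← hγ.1, ae_map_iff measurable_fst.aemeasurable hmeas] at h
      exact h
    have hηγ : ∀ᵐ p ∂γ, η p.2 {x | f x ≠ p.2} = 0 := by
      have hmeas : MeasurableSet {y : Y | η y {x | f x ≠ y} = 0} :=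
        hηmeas (measurableSet_singleton 0)
      have h := hηae
      rw [← hγ.2, ae_map_iff measurable_snd.aemeasurable hmeas] at h
      exact h
    -- cost of π equals cost of γ
    have hcost : ∫⁻ p, c (f p.1) (f p.2) ∂π = ∫⁻ p, c p.1 p.2 ∂γ := by
      rw [hπdef, lintegral_map hcfm measurable_snd]
      rw [Measure.lintegral_compProd (μ := γ) (κ := K)
        (f := fun a : (Y × Y) × (X × X) => c (f a.2.1) (f a.2.2)) (hcfm.comp measurable_snd)]
      refine lintegral_congr_ae ?_
      filter_upwards [hκγ, hηγ] with p hp1 hp2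
      have hxκ : ∀ᵐ x ∂κ p.1, f x = p.1 := by
        rw [ae_iff]; exact hp1
      have hxη : ∀ᵐ x ∂η p.2, f x = p.2 := by
        rw [ae_iff]; exact hp2
      have hκprob : IsProbabilityMeasure (κ p.1) := hκM.isProbabilityMeasure p.1
      have hηprob : IsProbabilityMeasure (η p.2) := hηM.isProbabilityMeasure p.2
      calc ∫⁻ q, c (f q.1) (f q.2) ∂(K p)
          = ∫⁻ x, ∫⁻ x', c (f x) (f x') ∂(η p.2) ∂(κ p.1) := by
            rw [hKapply p, lintegral_prod _ hcfm.aemeasurable]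
        _ = ∫⁻ _, c p.1 p.2 ∂(κ p.1) := by
            refine lintegral_congr_ae ?_
            filter_upwards [hxκ] with x hx
            rw [hx]
            calc ∫⁻ x', c p.1 (f x') ∂(η p.2)
                = ∫⁻ _, c p.1 p.2 ∂(η p.2) := by
                  refine lintegral_congr_ae ?_
                  filter_upwards [hxη] with x' hx'
                  rw [hx']
              _ = c p.1 p.2 := by rw [lintegral_const, measure_univ, mul_one]
        _ = c p.1 p.2 := by rw [lintegral_const, measure_univ, mul_one]
    calc otCost (fun x x' => c (f x) (f x')) μ ν
        ≤ ∫⁻ p, c (f p.1) (f p.2) ∂π := iInf₂_le π ⟨hπ1, hπ2⟩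
      _ = ∫⁻ p, c p.1 p.2 ∂γ := hcost
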